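/- Let n ≥ 2, n−2 ≤ Δ ≤ n, and let x ∈ [−1,1]ⁿ satisfy s₁(x) > Δ, where s₁(x) = max over odd sign vectors λ of ∑λᵢxᵢ. Then the L₁-distance from x to the set N(Δ) = {y ∈ [−1,1]ⁿ : s₁(y) ≤ Δ} equals s₁(x) − Δ. Moreover, this distance is attained by changing a single coordinate of x: for each index k, the point obtained from x by decreasing the k-th term λ_k x_k by s₁(x) − Δ (where λ is the maximizing sign vector) lies in N(Δ). -/

import Mathlib

open Finset

def IsOddSign (n : ℕ) (l : Fin n → ℝ) : Prop :=
  (∀ i, l i = 1 ∨ l i = -1) ∧ (∏ i, l i) = -1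

noncomputable def s1 (n : ℕ) (x : Fin n → ℝ) : ℝ :=
  sSup ((fun l => ∑ i, l i * x i) '' {l | IsOddSign n l})

def Cube (n : ℕ) : Set (Fin n → ℝ) := {x | ∀ i, x i ∈ Set.Icc (-1:ℝ) 1}

def NPoly (n : ℕ) (Δ : ℝ) : Set (Fin n → ℝ) :=
  {x | x ∈ Cube n ∧ ∀ l, IsOddSign n l → (∑ i, l i * x i) ≤ Δ}

lemma oddsign_finite (n : ℕ) : {l : Fin n → ℝ | IsOddSign n l}.Finite := by
  apply Set.Finite.subset
    (Set.Finite.pi (fun _ : Fin n => (Set.finite_singleton (1:ℝ)).insert (-1)))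
  intro l hl
  intro i _
  rcases hl.1 i with h | h <;> simp [h]

lemma oddsign_exists (n : ℕ) (hn : 0 < n) : ∃ l, IsOddSign n l := by
  refine ⟨fun i => if i = ⟨0, hn⟩ then -1 else 1, fun i => ?_, ?_⟩
  · by_cases h : i = ⟨0, hn⟩ <;> simp [h]
  · rw [Finset.prod_ite_eq']
    simp

lemma le_s1 (n : ℕ) (x l : Fin n → ℝ) (hl : IsOddSign n l) :
    ∑ i, l i * x i ≤ s1 n x :=
  le_csSup ((oddsign_finite n).image _).bddAbove ⟨l, hl, rfl⟩

lemma exists_max (n : ℕ) (hn : 0 < n) (x : Fin n → ℝ) :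
    ∃ l, IsOddSign n l ∧ ∑ i, l i * x i = s1 n x := by
  obtain ⟨l0, hl0⟩ := oddsign_exists n hn
  have hne : ((fun l => ∑ i, l i * x i) '' {l | IsOddSign n l}).Nonempty :=
    ⟨_, l0, hl0, rfl⟩
  have := hne.csSup_mem ((oddsign_finite n).image _)
  obtain ⟨l, hl, hval⟩ := this
  exact ⟨l, hl, hval⟩

lemma sum_update_mul (n : ℕ) (m x : Fin n → ℝ) (k : Fin n) (v : ℝ) :
    ∑ i, m i * Function.update x k v i = (∑ i, m i * x i) + m k * (v - x k) := by
  have h : ∀ i, m i * Function.update x k v i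
      = Function.update (fun j => m j * x j) k (m k * v) i := by
    intro i
    by_cases hik : i = k
    · subst hik; simp
    · simp [Function.update_of_ne hik]
  rw [Finset.sum_congr rfl fun i _ => h i,
    Finset.sum_update_of_mem (Finset.mem_univ k)]
  rw [Finset.sum_sdiff_eq_sub (by simp : {k} ⊆ Finset.univ)]
  simp
  ring

lemma sum_le_card (n : ℕ) (s : Finset (Fin n)) (f : Fin n → ℝ)
    (hf : ∀ i, f i ≤ 1) : ∑ i ∈ s, f i ≤ (s.card : ℝ) := by
  calc ∑ i ∈ s, f i ≤ ∑ _i ∈ s, (1:ℝ) := Finset.sum_le_sum fun i _ => hf i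
    _ = s.card := by simp

lemma cross_bound (n : ℕ) (hn : 2 ≤ n) (Δ : ℝ) (hΔ1 : (n:ℝ) - 2 ≤ Δ)
    (x : Fin n → ℝ) (hx : x ∈ Cube n) (l m : Fin n → ℝ)
    (hl : IsOddSign n l) (hm : IsOddSign n m)
    (hsum : ∑ i, l i * x i = s1 n x) (k : Fin n) (hne : m k ≠ l k) :
    ∑ i, m i * x i ≤ 2 * Δ - s1 n x := by
  classical
  set D : Finset (Fin n) := Finset.univ.filter (fun i => m i ≠ l i) with hD
  set Dc : Finset (Fin n) := Finset.univ.filter (fun i => ¬ m i ≠ l i) with hDc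
  have hkD : k ∈ D := by simp [hD, hne]
  have hbound : ∀ i, l i * x i ≤ 1 ∧ -1 ≤ l i * x i := by
    intro i
    have h1 := (hx i).1
    have h2 := (hx i).2
    rcases hl.1 i with h | h <;> rw [h] <;> constructor <;> nlinarith
  have hprod : ∏ i, (m i * l i) = 1 := by
    rw [Finset.prod_mul_distrib, hm.2, hl.2]; norm_num
  have hsplit : (∏ i ∈ D, (m i * l i)) * (∏ i ∈ Dc, (m i * l i)) = 1 := by
    rw [hD, hDc, Finset.prod_filter_mul_prod_filter_not]
    exact hprod
  have hDval : ∏ i ∈ D, (m i * l i) = (-1 : ℝ) ^ D.card := by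
    rw [← Finset.prod_const]
    apply Finset.prod_congr rfl
    intro i hi
    have hi' : m i ≠ l i := by simpa [hD] using hi
    rcases hm.1 i with h1 | h1 <;> rcases hl.1 i with h2 | h2 <;>
      simp [h1, h2] at hi' ⊢
  have hmeq : ∀ i ∈ Dc, m i = l i := by
    intro i hi
    simpa [hDc] using (Finset.mem_filter.mp hi).2
  have hDcval : ∏ i ∈ Dc, (m i * l i) = 1 := by
    apply Finset.prod_eq_one
    intro i hi
    rcases hl.1 i with h2 | h2 <;> rw [hmeq i hi, h2] <;> norm_num
  have heven : Even D.card := by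
    rw [hDval, hDcval, mul_one] at hsplit
    exact (neg_one_pow_eq_one_iff_even (by norm_num : (-1:ℝ) ≠ 1)).mp hsplit
  have hcards : D.card + Dc.card = n := by
    have h := Finset.card_filter_add_card_filter_not
      (s := (Finset.univ : Finset (Fin n))) (p := fun i => m i ≠ l i)
    rw [Finset.card_univ, Fintype.card_fin] at h
    rw [hD, hDc]
    convert h using 3
  have hcard2 : 2 ≤ D.card := by
    have h1 : 0 < D.card := Finset.card_pos.mpr ⟨k, hkD⟩
    obtain ⟨c, hc⟩ := heven
    omega
  have hcomp : ∑ i ∈ Dc, l i * x i ≤ (Dc.card : ℝ) :=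
    sum_le_card n Dc (fun i => l i * x i) (fun i => (hbound i).1)
  have hcompΔ : ∑ i ∈ Dc, l i * x i ≤ Δ := by
    have h2 : (Dc.card : ℝ) ≤ (n:ℝ) - 2 := by
      have : (D.card : ℝ) + Dc.card = n := by exact_mod_cast hcards
      have h3 : (2:ℝ) ≤ D.card := by exact_mod_cast hcard2
      linarith
    linarith
  have htot : (∑ i ∈ D, l i * x i) + ∑ i ∈ Dc, l i * x i = s1 n x := by
    rw [← hsum, hD, hDc, Finset.sum_filter_add_sum_filter_not]
  have hDsum : s1 n x - Δ ≤ ∑ i ∈ D, l i * x i := by linarith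
  have hmx : ∑ i, m i * x i
      = (∑ i ∈ Dc, l i * x i) - ∑ i ∈ D, l i * x i := by
    have e0 : ∑ i, m i * x i = (∑ i ∈ D, m i * x i) + ∑ i ∈ Dc, m i * x i := by
      rw [hD, hDc, Finset.sum_filter_add_sum_filter_not]
    have e1 : ∑ i ∈ D, m i * x i = - ∑ i ∈ D, l i * x i := by
      rw [← Finset.sum_neg_distrib]
      apply Finset.sum_congr rfl
      intro i hi
      have hi' : m i ≠ l i := by simpa [hD] using hi
      rcases hm.1 i with h1 | h1 <;> rcases hl.1 i with h2 | h2 <;>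
        simp [h1, h2] at hi' ⊢ <;> ring
    have e2 : ∑ i ∈ Dc, m i * x i = ∑ i ∈ Dc, l i * x i :=
      Finset.sum_congr rfl fun i hi => by rw [hmeq i hi]
    rw [e0, e1, e2]; ring
  linarith

lemma key_mem (n : ℕ) (hn : 2 ≤ n) (Δ : ℝ) (hΔ1 : (n:ℝ) - 2 ≤ Δ) (hΔ2 : Δ ≤ n)
    (x : Fin n → ℝ) (hx : x ∈ Cube n) (hs : Δ < s1 n x)
    (l : Fin n → ℝ) (hl : IsOddSign n l) (hsum : ∑ i, l i * x i = s1 n x)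
    (k : Fin n) :
    Function.update x k (x k - l k * (s1 n x - Δ)) ∈ NPoly n Δ := by
  classical
  set t : ℝ := s1 n x - Δ with htdef
  have ht : 0 < t := by simp [htdef]; linarith
  -- bound on l k * x k
  have hbound : ∀ i, l i * x i ≤ 1 ∧ -1 ≤ l i * x i := by
    intro i
    have h1 := (hx i).1
    have h2 := (hx i).2
    rcases hl.1 i with h | h <;> rw [h] <;> constructor <;> nlinarith
  have herase : ∑ i ∈ Finset.univ.erase k, l i * x i ≤ ((n:ℝ) - 1) := by
    have h := sum_le_card n (Finset.univ.erase k) (fun i => l i * x i)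
      (fun i => (hbound i).1)
    rwa [Finset.card_erase_of_mem (Finset.mem_univ k), Finset.card_univ,
      Fintype.card_fin, Nat.cast_sub (by omega), Nat.cast_one] at h
  have hlkx : s1 n x - ((n:ℝ) - 1) ≤ l k * x k := by
    have h := Finset.add_sum_erase Finset.univ (fun i => l i * x i) (Finset.mem_univ k)
    rw [hsum] at h
    linarith
  constructor
  · -- cube membership
    intro i
    by_cases hik : i = k
    · subst hik
      rw [Function.update_self]
      rcases hl.1 i with h | h <;> rw [h] <;> rw [h] at hlkx <;>
        constructor <;>
        nlinarith [(hx i).1, (hx i).2, hΔ1, hΔ2, ht, hlkx, htdef, hs]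
    · rw [Function.update_of_ne hik]
      exact hx i
  · -- the inequalities
    intro m hm
    rw [sum_update_mul]
    by_cases hmk : m k = l k
    · have hml : m k * (x k - l k * t - x k) = -t := by
        rw [hmk]
        rcases hl.1 k with h | h <;> rw [h] <;> ring
      rw [hml]
      have := le_s1 n x m hm
      linarith
    · have hcross := cross_bound n hn Δ hΔ1 x hx l m hl hm hsum k hmk
      have hml : m k * (x k - l k * t - x k) = t := by
        rcases hm.1 k with h1 | h1 <;> rcases hl.1 k with h2 | h2 <;>
          rw [h1, h2] <;> first | (exfalso; rw [h1, h2] at hmk; exact hmk rfl) | ring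
      rw [hml]
      linarith

theorem stmt10 (n : ℕ) (hn : 2 ≤ n) (Δ : ℝ) (hΔ1 : (n:ℝ) - 2 ≤ Δ) (hΔ2 : Δ ≤ n)
    (x : Fin n → ℝ) (hx : x ∈ Cube n) (hs : Δ < s1 n x) :
    sInf {d : ℝ | ∃ y ∈ NPoly n Δ, (∑ i, |x i - y i|) = d} = s1 n x - Δ ∧
    (∀ l, IsOddSign n l → (∑ i, l i * x i) = s1 n x →
      ∀ k, Function.update x k (x k - l k * (s1 n x - Δ)) ∈ NPoly n Δ) := by
  have hn0 : 0 < n := by omega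
  obtain ⟨lm, hlm, hlmval⟩ := exists_max n hn0 x
  have key := fun (l : Fin n → ℝ) hl hsum k => key_mem n hn Δ hΔ1 hΔ2 x hx hs l hl hsum k
  refine ⟨?_, key⟩
  set S : Set ℝ := {d : ℝ | ∃ y ∈ NPoly n Δ, (∑ i, |x i - y i|) = d} with hS
  set t : ℝ := s1 n x - Δ with htdef
  -- lower bound
  have hlb : ∀ d ∈ S, t ≤ d := by
    rintro d ⟨y, hy, rfl⟩
    have h1 : ∑ i, lm i * y i ≤ Δ := hy.2 lm hlm
    have h2 : ∀ i, lm i * (x i - y i) ≤ |x i - y i| := by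
      intro i
      calc lm i * (x i - y i) ≤ |lm i * (x i - y i)| := le_abs_self _
        _ = |x i - y i| := by
            rcases hlm.1 i with h | h <;> rw [h] <;> simp [abs_sub_comm]
    have h3 : ∑ i, lm i * (x i - y i) ≤ ∑ i, |x i - y i| :=
      Finset.sum_le_sum fun i _ => h2 i
    have h4 : ∑ i, lm i * (x i - y i) = (∑ i, lm i * x i) - ∑ i, lm i * y i := by
      rw [← Finset.sum_sub_distrib]
      apply Finset.sum_congr rfl
      intro i _
      ring
    rw [h4, hlmval] at h3
    simp only [htdef]
    linarith
  -- membership: the updated point achieves t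
  have hmem : t ∈ S := by
    set k : Fin n := ⟨0, hn0⟩
    refine ⟨Function.update x k (x k - lm k * t), key lm hlm hlmval k, ?_⟩
    have hterm : ∀ i, |x i - Function.update x k (x k - lm k * t) i|
        = if i = k then t else 0 := by
      intro i
      by_cases hik : i = k
      · subst hik
        rw [Function.update_self, if_pos rfl]
        have he : x k - (x k - lm k * t) = lm k * t := by ring
        have ht0 : (0:ℝ) ≤ t := by simp only [htdef]; linarith
        rw [he, abs_mul]
        rcases hlm.1 k with h | h <;> rw [h] <;>
          simp [abs_of_nonneg ht0]
      · rw [Function.update_of_ne hik, if_neg hik]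
        simp
    rw [Finset.sum_congr rfl fun i _ => hterm i]
    simp
  exact le_antisymm (csInf_le ⟨t, hlb⟩ hmem) (le_csInf ⟨t, hmem⟩ hlb)
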